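/- Let P be the uniform probability measure on the segment {(x,0) : 0 ≤ x ≤ 2} ⊂ ℝ², and let the constraint be the segment of the line y = 1 between (0,1) and (28/15, 1). Then for 1 ≤ n ≤ 7, the set α_n = {((2i−1)/n, 1) : 1 ≤ i ≤ n} is an optimal set of n points; and for every n ≥ 8, the set α_n = {(a_i,1) : 1 ≤ i ≤ n} with a_i = 28(2i−1)/(15(2n−1)) for 1 ≤ i ≤ n−1 and a_n = 28/15 is an optimal set of n points, with nth constrained quantization error V_n = 7(5788(n−1)n + 3015)/(10125(1−2n)²). -/

import Mathlib

open MeasureTheory Real Set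

noncomputable section

abbrev E2 : Type := EuclideanSpace ℝ (Fin 2)

/-- The point `(x, y)` of the Euclidean plane. -/
def cpt (x y : ℝ) : E2 := WithLp.toLp 2 ![x, y]

/-- Distortion error of `P` with respect to the set `α`: `∫ min_{a ∈ α} ‖x - a‖² dP(x)`. -/
def cDistortion (P : Measure E2) (α : Set E2) : ℝ :=
  ∫ x, (⨅ a : α, dist x (a : E2) ^ 2) ∂P

/-- The `n`th constrained quantization error of `P` with constraint set `S`. -/
def cqError (P : Measure E2) (S : Set E2) (n : ℕ) : ℝ :=
  sInf {v : ℝ | ∃ α : Set E2, α ⊆ S ∧ α.Finite ∧ 1 ≤ α.ncard ∧ α.ncard ≤ n ∧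
    v = cDistortion P α}

/-- `α` is an optimal set of `n` points for `P` with constraint `S`: it is an admissible set
attaining the `n`th constrained quantization error. -/
def IsOptimalNSet (P : Measure E2) (S : Set E2) (n : ℕ) (α : Set E2) : Prop :=
  α ⊆ S ∧ α.Finite ∧ 1 ≤ α.ncard ∧ α.ncard ≤ n ∧ cDistortion P α = cqError P S n

/-- The uniform probability distribution on the interval `[a, b]`. -/
def uniformIccM (a b : ℝ) : Measure ℝ :=
  (ENNReal.ofReal (b - a))⁻¹ • volume.restrict (Icc a b)

/-- The point of the line `y = m x + c` with abscissa `t`. -/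
def segPt (m c t : ℝ) : E2 := cpt t (m * t + c)

open intervalIntegral


-- L1
lemma L1 (a b : ℝ) (ha : 0 ≤ a) (hb : 0 ≤ b) : (a+b)^3/4 ≤ a^3 + b^3 := by
  nlinarith [mul_nonneg (mul_nonneg ha hb) (add_nonneg ha hb), sq_nonneg (a-b), mul_nonneg (add_nonneg ha hb) (sq_nonneg (a-b))]

-- L2
lemma L2 (u t : ℝ) (h1 : 26/15 ≤ u) (h2 : u ≤ t) (h3 : t ≤ 28/15) :
    (2-28/15)^3 + (28/15-u)^3 ≤ (2-t)^3 + (t-u)^3 := by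
  nlinarith [sq_nonneg (t-u), sq_nonneg (28/15-u), sq_nonneg (2-t), mul_nonneg (sub_nonneg.2 h3) (sub_nonneg.2 h2), mul_nonneg (sub_nonneg.2 h3) (sub_nonneg.2 (h1.trans h2))]

-- L3
lemma L3 (j p q : ℝ) (hj : 1 ≤ j) (hp : 0 ≤ p) (hq : 0 ≤ q) :
    (p+q)^3/(12*(j+1)^2) ≤ p^3/12 + q^3/(12*j^2) := by
  rw [div_add_div _ _ (by norm_num) (by positivity), div_le_div_iff₀ (by positivity) (by positivity)]
  nlinarith [mul_nonneg (sq_nonneg (q - j*p)) (by positivity : (0:ℝ) ≤ (2*j+1)*q + j*(j+2)*p), sq_nonneg (q-j*p)]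

-- L4
lemma L4 (j p q : ℝ) (hj : 1 ≤ j) (hp : 0 ≤ p) (hq : 0 ≤ q) :
    (p+q)^3/(3*(j+2)^2) ≤ p^3/12 + q^3/(3*j^2) := by
  rw [div_add_div _ _ (by norm_num) (by positivity), div_le_div_iff₀ (by positivity) (by positivity)]
  nlinarith [mul_nonneg (sq_nonneg (2*q - j*p)) (by positivity : (0:ℝ) ≤ 4*(j+1)*q + j*(j+4)*p)]

-- L5 (e = 2/15)
lemma L5 (j r : ℝ) (hj : 1 ≤ j) (hr : 0 ≤ r) :
    (r+2/15)^3/(12*j^2) ≤ r^3/(3*(2*j-1)^2) + (2/15)^3/3 := by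
  have hd : (0:ℝ) < 3*(2*j-1)^2 := by nlinarith
  rw [div_add_div _ _ (ne_of_gt hd) (by norm_num), div_le_div_iff₀ (by positivity) (by positivity)]
  have hlin : (0:ℝ) ≤ (4*j-1)*r + (4*j^2-1)*(2/15) := by nlinarith
  nlinarith [mul_nonneg (sq_nonneg (r - (2*j-1)*(2/15))) hlin]

-- L6
lemma L6 (j p w : ℝ) (hj : 1 ≤ j) (hp : 0 ≤ p) (hw : 0 ≤ w) (hpw : p + w ≤ 4/15) :
    (p+w)^3/12 + 2*j*(2/15)^3/3 ≤ p^3/12 + (2*j*(2/15)+w)^3/(12*j^2) := by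
  rw [div_add_div _ _ (by norm_num : (12:ℝ) ≠ 0) (by norm_num : (3:ℝ) ≠ 0), div_add_div _ _ (by norm_num : (12:ℝ) ≠ 0) (by positivity), div_le_div_iff₀ (by positivity) (by positivity)]
  have hk : (0:ℝ) ≤ 48/225 - (3*p^2+3*p*w+w^2) := by nlinarith [mul_nonneg hp hw]
  nlinarith [mul_nonneg (mul_nonneg (sq_nonneg j) hw) hk, mul_nonneg (mul_nonneg (by linarith : (0:ℝ) ≤ j) hw) hw, mul_nonneg hw (mul_nonneg hw hw), mul_nonneg (mul_nonneg (sub_nonneg.2 hj) hw) hw]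

-- L7
lemma L7 (j ρ : ℝ) (hj : 1 ≤ j) (hρ : 0 ≤ ρ) :
    (ρ+(2*j-1)*(2/15))^3/(3*(2*j+1)^2) + (2/15)^3/3 ≤ ρ^3/12 + 2*j*(2/15)^3/3 := by
  rw [div_add_div _ _ (by positivity : (3:ℝ)*(2*j+1)^2 ≠ 0) (by norm_num : (3:ℝ) ≠ 0), div_add_div _ _ (by norm_num : (12:ℝ) ≠ 0) (by norm_num : (3:ℝ) ≠ 0), div_le_div_iff₀ (by positivity) (by positivity)]
  have h1 : (0:ℝ) ≤ 2*j-1 := by linarith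
  have hlin : (0:ℝ) ≤ (2*j-1)*(2*j+3)*ρ + (2*j-1)*(8*j)*(2/15) :=
    add_nonneg (mul_nonneg (mul_nonneg h1 (by linarith)) hρ) (mul_nonneg (mul_nonneg h1 (by linarith)) (by norm_num))
  nlinarith [mul_nonneg (sq_nonneg (ρ - 4/15)) hlin]


noncomputable def Phi (j u : ℝ) : ℝ :=
  if 2*j*(2/15) ≤ 2 - u then (2-u)^3/(12*j^2) else (28/15-u)^3/(3*(2*j-1)^2) + (2/15)^3/3


lemma BaseIneq (u t : ℝ) (hu : 0 ≤ u) (hut : u ≤ t) (htc : t ≤ 28/15) :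
    Phi 1 u ≤ ((2-t)^3 + (t-u)^3)/3 := by
  unfold Phi
  split_ifs with h
  · have := L1 (2-t) (t-u) (by linarith) (by linarith)
    have he : 2 - t + (t - u) = 2 - u := by ring
    rw [he] at this
    calc (2-u)^3/(12*1^2) = ((2-u)^3/4)/3 := by ring
    _ ≤ _ := by linarith
  · have h26 : 26/15 ≤ u := by linarith
    have := L2 u t h26 hut htc
    have e1 : (28/15-u)^3/(3*(2*1-1)^2) + (2/15)^3/3 = ((2-28/15)^3 + (28/15-u)^3)/3 := by norm_num; ring
    rw [e1]
    linarith

lemma StepIneq (j u m : ℝ) (hj : 1 ≤ j) (hu : 0 ≤ u) (hum : u ≤ m) (hmc : m ≤ 28/15) :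
    Phi (j+1) u ≤ (m-u)^3/12 + Phi j m := by
  unfold Phi
  have hm2 : m ≤ 2 := by linarith
  split_ifs with h1 h2 h2
  · -- both unconstrained
    have := L3 j (m-u) (2-m) hj (by linarith) (by linarith)
    have he : m - u + (2 - m) = 2 - u := by ring
    rw [he] at this; linarith
  · -- m constrained, u unconstrained : L5 then L3
    have h5 := L5 j (28/15-m) hj (by linarith)
    have e1 : 28/15 - m + 2/15 = 2 - m := by ring
    rw [e1] at h5
    have h3 := L3 j (m-u) (2-m) hj (by linarith) (by linarith)
    have he : m - u + (2 - m) = 2 - u := by ring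
    rw [he] at h3; linarith
  · -- m unconstrained, u constrained : L6 then L7
    have hw : 0 ≤ 2 - m - 2*j*(2/15) := by linarith
    have hpw : (m-u) + (2 - m - 2*j*(2/15)) ≤ 4/15 := by
      have : 2 - u < 2*(j+1)*(2/15) := by linarith
      linarith
    have h6 := L6 j (m-u) (2 - m - 2*j*(2/15)) hj (by linarith) hw hpw
    have e1 : 2*j*(2/15) + (2 - m - 2*j*(2/15)) = 2 - m := by ring
    rw [e1] at h6
    have h7 := L7 j ((m-u) + (2 - m - 2*j*(2/15))) hj (by linarith)
    have e2 : (m-u) + (2 - m - 2*j*(2/15)) + (2*j-1)*(2/15) = 28/15 - u := by ring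
    rw [e2] at h7
    have e3 : 2*(j+1)-1 = 2*j+1 := by ring
    rw [e3]
    linarith
  · -- both constrained : L4 with j' = 2j-1
    have h4 := L4 (2*j-1) (m-u) (28/15-m) (by linarith) (by linarith) (by linarith)
    have e1 : m - u + (28/15 - m) = 28/15 - u := by ring
    have e2 : 2*j-1+2 = 2*(j+1)-1 := by ring
    rw [e1, e2] at h4
    linarith



noncomputable def dm (T : Finset ℝ) (hT : T.Nonempty) (x : ℝ) : ℝ :=
  T.inf' hT (fun t => (x - t)^2)

lemma cont_dm (T : Finset ℝ) (hT : T.Nonempty) : Continuous (dm T hT) := by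
  induction hT using Finset.Nonempty.cons_induction with
  | singleton a => exact ((continuous_id.sub continuous_const : Continuous fun x : ℝ => x - a).pow 2).congr (fun x => by simp [dm])
  | cons a s ha hs ih =>
      have : dm (Finset.cons a s ha) (Finset.cons_nonempty ha) = fun x => min ((x - a)^2) (dm s hs x) := by
        funext x
        rw [dm, Finset.inf'_cons (H := hs)]
        rfl
      rw [this]
      exact Continuous.min ((continuous_id.sub continuous_const).pow 2) ih

lemma iq (a b t : ℝ) : ∫ x in a..b, (x - t)^2 = ((b-t)^3 - (a-t)^3)/3 := by
  rw [intervalIntegral.integral_comp_sub_right (fun y => y^2) t, integral_pow]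
  norm_num

lemma dm_insert (t : ℝ) (T : Finset ℝ) (hT : T.Nonempty) (x : ℝ) :
    dm (insert t T) (Finset.insert_nonempty t T) x = min ((x - t)^2) (dm T hT x) := by
  rw [dm, Finset.inf'_insert (H := hT)]
  rfl

lemma peel (T' : Finset ℝ) (hT' : T'.Nonempty) (t u : ℝ)
    (hlt : ∀ s ∈ T', t < s) (hut : u ≤ t) (hle2 : ∀ s ∈ T', s ≤ 2) :
    ∫ x in u..2, dm (insert t T') (Finset.insert_nonempty t T') x
      = (∫ x in u..((t + T'.min' hT')/2), (x - t)^2)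
        + ∫ x in ((t + T'.min' hT')/2)..2, dm T' hT' x := by
  set t' := T'.min' hT' with ht'def
  have ht'mem : t' ∈ T' := T'.min'_mem hT'
  have htt' : t < t' := hlt t' ht'mem
  have ht'2 : t' ≤ 2 := hle2 t' ht'mem
  set m := (t + t')/2 with hmdef
  have hum : u ≤ m := by simp only [hmdef]; linarith
  have hm2 : m ≤ 2 := by simp only [hmdef]; linarith
  have h1 : ∫ x in u..2, dm (insert t T') (Finset.insert_nonempty t T') x
      = (∫ x in u..m, dm (insert t T') (Finset.insert_nonempty t T') x)
        + ∫ x in m..2, dm (insert t T') (Finset.insert_nonempty t T') x := by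
    rw [integral_add_adjacent_intervals]
    · exact (cont_dm _ _).intervalIntegrable _ _
    · exact (cont_dm _ _).intervalIntegrable _ _
  rw [h1]
  congr 1
  · apply intervalIntegral.integral_congr
    intro x hx
    rw [Set.uIcc_of_le hum] at hx
    rw [dm_insert t T' hT' x]
    refine min_eq_left (Finset.le_inf' hT' _ fun s hsmem => ?_)
    have hs : t < s := hlt s hsmem
    have hts : t' ≤ s := T'.min'_le s hsmem
    have hxm : x ≤ m := hx.2
    have : m ≤ (t + s)/2 := by simp only [hmdef]; linarith
    nlinarith
  · apply intervalIntegral.integral_congr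
    intro x hx
    rw [Set.uIcc_of_le hm2] at hx
    rw [dm_insert t T' hT' x]
    refine min_eq_right ?_
    have hin : dm T' hT' x ≤ (x - t')^2 := Finset.inf'_le _ ht'mem
    have hxm : m ≤ x := hx.1
    nlinarith

lemma dm_congr {T S : Finset ℝ} (h : T = S) (hT : T.Nonempty) (hS : S.Nonempty) : dm T hT = dm S hS := by subst h; rfl

lemma dm_singleton (t x : ℝ) : dm {t} (Finset.singleton_nonempty t) x = (x - t)^2 := by
  simp [dm]

lemma LB : ∀ k : ℕ, ∀ T : Finset ℝ, ∀ hT : T.Nonempty, T.card = k → ∀ u : ℝ, 0 ≤ u →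
    (∀ t ∈ T, u ≤ t ∧ t ≤ 28/15) → Phi k u ≤ ∫ x in u..2, dm T hT x := by
  intro k
  induction k with
  | zero => intro T hT hcard; simp [Finset.card_eq_zero] at hcard; subst hcard; exact absurd hT (by simp)
  | succ k ih =>
    intro T hT hcard u hu hmem
    rcases Nat.eq_zero_or_pos k with hk0 | hkpos
    · -- card = 1
      subst hk0
      obtain ⟨t, rfl⟩ := Finset.card_eq_one.1 hcard
      obtain ⟨hut, htc⟩ := hmem t (Finset.mem_singleton_self t)
      have heq : ∫ x in u..2, dm {t} hT x = ((2-t)^3 + (t-u)^3)/3 := by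
        rw [show dm {t} hT = fun x => (x-t)^2 from funext (dm_singleton t)]
        rw [iq]; ring
      rw [heq]
      simpa using BaseIneq u t hu hut htc
    · -- card ≥ 2
      set t := T.min' hT with htdef
      have htmem : t ∈ T := T.min'_mem hT
      set T' := T.erase t with hT'def
      have hcard' : T'.card = k := by rw [hT'def, Finset.card_erase_of_mem htmem, hcard]; rfl
      have hT' : T'.Nonempty := Finset.card_pos.1 (hcard' ▸ hkpos)
      have htnot : t ∉ T' := Finset.notMem_erase t T
      have hTins : T = insert t T' := (Finset.insert_erase htmem).symm
      have hlt : ∀ s ∈ T', t < s := by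
        intro s hs
        have h1 : t ≤ s := T.min'_le s (Finset.mem_of_mem_erase hs)
        have h2 : s ≠ t := Finset.ne_of_mem_erase hs
        exact lt_of_le_of_ne h1 (Ne.symm h2)
      obtain ⟨hut, htc⟩ := hmem t htmem
      set t' := T'.min' hT' with ht'def
      have ht'mem' : t' ∈ T' := T'.min'_mem hT'
      have htt' : t < t' := hlt t' ht'mem'
      have ht'c : t' ≤ 28/15 := (hmem t' (Finset.mem_of_mem_erase ht'mem')).2
      set m := (t + t')/2 with hmdef
      have hum : u ≤ m := by simp only [hmdef]; linarith
      have hmc : m ≤ 28/15 := by simp only [hmdef]; linarith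
      have hpeel : ∫ x in u..2, dm T hT x
          = (∫ x in u..m, (x - t)^2) + ∫ x in m..2, dm T' hT' x := by
        have hthis := peel T' hT' t u hlt hut (fun s hs => le_trans (hmem s (Finset.mem_of_mem_erase hs)).2 (by norm_num))
        have hdm : dm T hT = dm (insert t T') (Finset.insert_nonempty t T') := dm_congr hTins _ _
        rw [hdm]
        exact hthis
      have hIH : Phi k m ≤ ∫ x in m..2, dm T' hT' x := by
        apply ih T' hT' hcard' m (by simp only [hmdef]; linarith)
        intro s hs
        refine ⟨?_, (hmem s (Finset.mem_of_mem_erase hs)).2⟩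
        have : t' ≤ s := T'.min'_le s hs
        simp only [hmdef]; linarith
      have hcell : (m-u)^3/12 ≤ ∫ x in u..m, (x - t)^2 := by
        rw [iq]
        have := L1 (m-t) (t-u) (by simp only [hmdef]; linarith) (by linarith)
        have he : m - t + (t - u) = m - u := by ring
        rw [he] at this
        nlinarith
      have hstep := StepIneq (k:ℝ) u m (by exact_mod_cast hkpos) hu hum hmc
      have hcast : ((k+1 : ℕ) : ℝ) = (k:ℝ) + 1 := by push_cast; ring
      rw [hcast]
      rw [hpeel]
      linarith

lemma Icc_insert (a b : ℕ) (hab : a ≤ b) : Finset.Icc a b = insert a (Finset.Icc (a+1) b) := by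
  ext x; simp [Finset.mem_Icc, Finset.mem_insert]; omega

lemma himg_min (f : ℕ → ℝ) (a b : ℕ) (hab : a ≤ b)
    (hmono : ∀ x y, a ≤ x → x < y → y ≤ b → f x < f y)
    (h : ((Finset.Icc a b).image f).Nonempty) :
    ((Finset.Icc a b).image f).min' h = f a := by
  apply le_antisymm
  · exact Finset.min'_le _ _ (Finset.mem_image_of_mem f (Finset.mem_Icc.2 ⟨le_refl a, hab⟩))
  · apply Finset.le_min'
    intro y hy
    obtain ⟨j, hj, rfl⟩ := Finset.mem_image.1 hy
    rw [Finset.mem_Icc] at hj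
    rcases eq_or_lt_of_le hj.1 with h1 | h1
    · rw [h1]
    · exact (hmono a j (le_refl a) h1 hj.2).le

lemma himg_notmem (f : ℕ → ℝ) (a b : ℕ)
    (hmono : ∀ x y, a ≤ x → x < y → y ≤ b → f x < f y) :
    f a ∉ (Finset.Icc (a+1) b).image f := by
  intro hmem
  obtain ⟨j, hj, hfj⟩ := Finset.mem_image.1 hmem
  rw [Finset.mem_Icc] at hj
  exact absurd hfj (ne_of_gt (hmono a j (le_refl a) hj.1 hj.2))

lemma himg_lt (f : ℕ → ℝ) (a b : ℕ)
    (hmono : ∀ x y, a ≤ x → x < y → y ≤ b → f x < f y) :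
    ∀ s ∈ (Finset.Icc (a+1) b).image f, f a < s := by
  intro s hs
  obtain ⟨j, hj, rfl⟩ := Finset.mem_image.1 hs
  rw [Finset.mem_Icc] at hj
  exact hmono a j (le_refl a) hj.1 hj.2

lemma evalA (n : ℕ) (hn : 1 ≤ n) :
    ∀ d i : ℕ, 1 ≤ d → i + d = n →
    ∀ h : ((Finset.Icc (i+1) n).image (fun j : ℕ => (2*(j:ℝ)-1)/(n:ℝ))).Nonempty,
    ∫ x in (2*(i:ℝ)/(n:ℝ))..2, dm _ h x = d * (2/(3*(n:ℝ)^3)) := by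
  have hn0 : (0:ℝ) < n := by exact_mod_cast hn
  intro d
  induction d with
  | zero => intro i h0; omega
  | succ d ih =>
    intro i _ hid h
    rcases Nat.eq_zero_or_pos d with hd0 | hdpos
    · -- base : d = 0, i + 1 = n
      subst hd0
      have hin : i + 1 = n := by omega
      have hIcc : Finset.Icc (i+1) n = {n} := by rw [hin, Finset.Icc_self]
      have hdmeq : dm ((Finset.Icc (i+1) n).image (fun j : ℕ => (2*(j:ℝ)-1)/(n:ℝ))) h
          = dm {(2*(n:ℝ)-1)/(n:ℝ)} (Finset.singleton_nonempty _) := by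
        apply dm_congr
        rw [hIcc, Finset.image_singleton]
      rw [hdmeq, show dm {(2*(n:ℝ)-1)/(n:ℝ)} (Finset.singleton_nonempty _) = fun x => (x-(2*(n:ℝ)-1)/(n:ℝ))^2 from funext (dm_singleton _), iq]
      have hcast : (i:ℝ) = (n:ℝ) - 1 := by
        have h' : ((i:ℕ):ℝ) + 1 = (n:ℝ) := by exact_mod_cast hin
        linarith
      rw [hcast]
      field_simp
      ring
    · -- step
      have hi2 : i + 2 ≤ n := by omega
      have hi1 : i + 1 ≤ n := by omega
      set f : ℕ → ℝ := fun j : ℕ => (2*(j:ℝ)-1)/(n:ℝ) with hf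
      have hmono : ∀ x y : ℕ, i+1 ≤ x → x < y → y ≤ n → f x < f y := by
        intro x y _ hxy _
        simp only [hf]
        have hxy' : (x:ℝ) < y := by exact_mod_cast hxy
        rw [div_lt_div_iff₀ hn0 hn0]
        nlinarith
      have hT' : ((Finset.Icc (i+2) n).image f).Nonempty :=
        ((Finset.nonempty_Icc).2 hi2).image f
      have hsplit : (Finset.Icc (i+1) n).image f = insert (f (i+1)) ((Finset.Icc (i+2) n).image f) := by
        rw [Icc_insert (i+1) n hi1, Finset.image_insert]
      have hdmeq : dm ((Finset.Icc (i+1) n).image f) h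
          = dm (insert (f (i+1)) ((Finset.Icc (i+2) n).image f)) (Finset.insert_nonempty _ _) :=
        dm_congr hsplit _ _
      have hlt := himg_lt f (i+1) n (by intro x y hx hxy hy; exact hmono x y hx hxy hy)
      have hmin : ((Finset.Icc (i+2) n).image f).min' hT' = f (i+2) :=
        himg_min f (i+2) n hi2 (fun x y hx hxy hy => hmono x y (by omega) hxy hy) hT'
      have hut : 2*(i:ℝ)/(n:ℝ) ≤ f (i+1) := by
        simp only [hf]; push_cast
        rw [div_le_div_iff₀ hn0 hn0]
        nlinarith
      have hle2 : ∀ s ∈ (Finset.Icc (i+2) n).image f, s ≤ 2 := by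
        intro s hs
        obtain ⟨j, hj, rfl⟩ := Finset.mem_image.1 hs
        rw [Finset.mem_Icc] at hj
        have hjn : (j:ℝ) ≤ n := by exact_mod_cast hj.2
        simp only [hf]
        rw [div_le_iff₀ hn0]
        linarith
      have hpeel := peel ((Finset.Icc (i+2) n).image f) hT' (f (i+1)) (2*(i:ℝ)/(n:ℝ)) hlt hut hle2
      rw [hmin] at hpeel
      have hm : (f (i+1) + f (i+2))/2 = 2*((i+1:ℕ):ℝ)/(n:ℝ) := by
        simp only [hf]; push_cast; field_simp; ring
      rw [hm] at hpeel
      rw [hdmeq, hpeel]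
      have hIH := ih (i+1) hdpos (by omega) hT'
      rw [hIH]
      have hcell : ∫ x in (2*(i:ℝ)/(n:ℝ))..(2*((i+1:ℕ):ℝ)/(n:ℝ)), (x - f (i+1))^2 = 2/(3*(n:ℝ)^3) := by
        rw [iq]
        simp only [hf]; push_cast; field_simp; ring
      rw [hcell]
      push_cast
      ring

lemma evalB (n : ℕ) (hn : 8 ≤ n) :
    ∀ d i : ℕ, 1 ≤ d → i + d = n →
    ∀ h : ((Finset.Icc (i+1) n).image
        (fun j : ℕ => if j = n then (28:ℝ)/15 else 28*(2*(j:ℝ)-1)/(15*(2*(n:ℝ)-1)))).Nonempty,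
    ∫ x in (56*(i:ℝ)/(15*(2*(n:ℝ)-1)))..2, dm _ h x
      = ((d:ℝ)-1) * (2*(28/(15*(2*(n:ℝ)-1)))^3/3)
        + (((2:ℝ)/15)^3/3 + (28/(15*(2*(n:ℝ)-1)))^3/3) := by
  have hn1 : (1:ℝ) ≤ n := by exact_mod_cast le_trans (by norm_num) hn
  have hd0 : (0:ℝ) < 2*(n:ℝ)-1 := by linarith
  have hdne : (2*(n:ℝ)-1) ≠ 0 := ne_of_gt hd0
  set f : ℕ → ℝ := fun j : ℕ => if j = n then (28:ℝ)/15 else 28*(2*(j:ℝ)-1)/(15*(2*(n:ℝ)-1)) with hf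
  have hfn : f n = 28/15 := by simp [hf]
  have hfo : ∀ j : ℕ, j ≠ n → f j = 28*(2*(j:ℝ)-1)/(15*(2*(n:ℝ)-1)) := by
    intro j hj; simp [hf, hj]
  have hmono : ∀ x y : ℕ, x < y → y ≤ n → f x < f y := by
    intro x y hxy hyn
    have hxn : x ≠ n := by omega
    rw [hfo x hxn]
    rcases eq_or_ne y n with hy | hyn'
    · rw [hy, hfn]
      rw [div_lt_div_iff₀ (by positivity) (by norm_num)]
      have hx' : (x:ℝ) < n := by
        have : x < n := hy ▸ hxy
        exact_mod_cast this
      nlinarith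
    · rw [hfo y hyn']
      have hxy' : (x:ℝ) < y := by exact_mod_cast hxy
      rw [div_lt_div_iff₀ (by positivity) (by positivity)]
      nlinarith
  intro d
  induction d with
  | zero => intro i h0; omega
  | succ d ih =>
    intro i _ hid h
    rcases Nat.eq_zero_or_pos d with hd0 | hdpos
    · -- base : d = 0, i + 1 = n
      subst hd0
      have hin : i + 1 = n := by omega
      have hIcc : Finset.Icc (i+1) n = {n} := by rw [hin, Finset.Icc_self]
      have hdmeq : dm ((Finset.Icc (i+1) n).image f) h
          = dm {(28:ℝ)/15} (Finset.singleton_nonempty _) := by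
        apply dm_congr
        rw [hIcc, Finset.image_singleton, hfn]
      rw [hdmeq, show dm {(28:ℝ)/15} (Finset.singleton_nonempty _) = fun x => (x-28/15)^2 from funext (dm_singleton _), iq]
      have hcast : (i:ℝ) = (n:ℝ) - 1 := by
        have h' : ((i:ℕ):ℝ) + 1 = (n:ℝ) := by exact_mod_cast hin
        linarith
      rw [hcast]
      field_simp
      ring
    · -- step
      have hi2 : i + 2 ≤ n := by omega
      have hi1 : i + 1 ≤ n := by omega
      have hi1n : i + 1 ≠ n := by omega
      have hT' : ((Finset.Icc (i+2) n).image f).Nonempty :=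
        ((Finset.nonempty_Icc).2 hi2).image f
      have hsplit : (Finset.Icc (i+1) n).image f = insert (f (i+1)) ((Finset.Icc (i+2) n).image f) := by
        rw [Icc_insert (i+1) n hi1, Finset.image_insert]
      have hdmeq : dm ((Finset.Icc (i+1) n).image f) h
          = dm (insert (f (i+1)) ((Finset.Icc (i+2) n).image f)) (Finset.insert_nonempty _ _) :=
        dm_congr hsplit _ _
      have hlt := himg_lt f (i+1) n (fun x y _ hxy hy => hmono x y hxy hy)
      have hmin : ((Finset.Icc (i+2) n).image f).min' hT' = f (i+2) :=
        himg_min f (i+2) n hi2 (fun x y _ hxy hy => hmono x y hxy hy) hT'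
      have hut : 56*(i:ℝ)/(15*(2*(n:ℝ)-1)) ≤ f (i+1) := by
        rw [hfo _ hi1n]; push_cast
        rw [div_le_div_iff₀ (by positivity) (by positivity)]
        nlinarith [Nat.cast_nonneg (α := ℝ) i]
      have hle2 : ∀ s ∈ (Finset.Icc (i+2) n).image f, s ≤ 2 := by
        intro s hs
        obtain ⟨j, hj, rfl⟩ := Finset.mem_image.1 hs
        rw [Finset.mem_Icc] at hj
        rcases eq_or_ne j n with rfl | hjn
        · rw [hfn]; norm_num
        · rw [hfo _ hjn]
          have hjn' : (j:ℝ) ≤ n := by exact_mod_cast hj.2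
          rw [div_le_iff₀ (by positivity)]
          nlinarith
      have hpeel := peel ((Finset.Icc (i+2) n).image f) hT' (f (i+1)) (56*(i:ℝ)/(15*(2*(n:ℝ)-1))) hlt hut hle2
      rw [hmin] at hpeel
      have hm : (f (i+1) + f (i+2))/2 = 56*((i+1:ℕ):ℝ)/(15*(2*(n:ℝ)-1)) := by
        rcases eq_or_ne (i+2) n with hi2n | hi2n
        · have hcast : (i:ℝ) = (n:ℝ) - 2 := by
            have h' : ((i:ℕ):ℝ) + 2 = (n:ℝ) := by exact_mod_cast hi2n
            linarith
          rw [hfo _ hi1n, hi2n, hfn]; push_cast [hcast]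
          field_simp; ring
        · rw [hfo _ hi1n, hfo _ hi2n]; push_cast
          field_simp; ring
      rw [hm] at hpeel
      rw [hdmeq, hpeel]
      have hIH := ih (i+1) hdpos (by omega) hT'
      rw [hIH]
      have hcell : ∫ x in (56*(i:ℝ)/(15*(2*(n:ℝ)-1)))..(56*((i+1:ℕ):ℝ)/(15*(2*(n:ℝ)-1))), (x - f (i+1))^2
          = 2*(28/(15*(2*(n:ℝ)-1)))^3/3 := by
        rw [iq, hfo _ hi1n]; push_cast
        field_simp
        ring
      rw [hcell]
      push_cast
      ring

lemma cpt_apply0 (x y : ℝ) : (cpt x y) 0 = x := rfl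
lemma cpt_apply1 (x y : ℝ) : (cpt x y) 1 = y := rfl

lemma dist_cpt_sq (x a : ℝ) : dist (cpt x 0) (cpt a 1) ^ 2 = (x-a)^2 + 1 := by
  rw [EuclideanSpace.dist_eq]
  rw [sq_sqrt (by positivity)]
  rw [Fin.sum_univ_two]
  simp [cpt, Real.dist_eq, sq_abs]

lemma cpt1_inj : Function.Injective (fun t : ℝ => cpt t 1) := by
  intro a b h
  exact congrArg (fun v : E2 => v 0) h

lemma cont_cpt0 : Continuous (fun x : ℝ => cpt x 0) := by
  have h : Continuous (fun x : ℝ => (![x, 0] : Fin 2 → ℝ)) := by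
    apply continuous_pi
    intro i
    fin_cases i
    · exact continuous_id
    · exact continuous_const
  exact (PiLp.continuousLinearEquiv 2 ℝ (fun _ : Fin 2 => ℝ)).symm.continuous.comp h

lemma cont_dist_sq (t : ℝ) : Continuous (fun x : E2 => dist x (cpt t 1) ^ 2) :=
  (continuous_id.dist continuous_const).pow 2

lemma seg_eq : segment ℝ (cpt 0 1) (cpt (28/15) 1) = (fun t : ℝ => cpt t 1) '' Set.Icc 0 (28/15) := by
  rw [segment_eq_image]
  ext z
  constructor
  · rintro ⟨θ, hθ, rfl⟩
    refine ⟨θ * (28/15), ⟨by nlinarith [hθ.1], by nlinarith [hθ.1, hθ.2]⟩, ?_⟩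
    ext i
    fin_cases i <;> simp [cpt] <;> ring
  · rintro ⟨t, ht, rfl⟩
    refine ⟨t * (15/28), ⟨by nlinarith [ht.1], by nlinarith [ht.2]⟩, ?_⟩
    ext i
    fin_cases i <;> simp [cpt] <;> ring

-- iInf over image set = inf'
lemma iInf_img (T : Finset ℝ) (hT : T.Nonempty) (g : E2 → ℝ) :
    (⨅ a : ((fun t : ℝ => cpt t 1) '' (T : Set ℝ)), g a) = T.inf' hT (fun t => g (cpt t 1)) := by
  have h1 : (⨅ a : ((fun t : ℝ => cpt t 1) '' (T : Set ℝ)), g a)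
      = sInf (g '' ((fun t : ℝ => cpt t 1) '' (T : Set ℝ))) := (sInf_image').symm
  rw [h1, Set.image_image, Finset.inf'_eq_csInf_image]

lemma cont_infdist (T : Finset ℝ) (hT : T.Nonempty) :
    Continuous (fun x : E2 => T.inf' hT (fun t => dist x (cpt t 1) ^ 2)) := by
  induction hT using Finset.Nonempty.cons_induction with
  | singleton a => exact ((continuous_id.dist continuous_const : Continuous fun x : E2 => dist x (cpt a 1)).pow 2).congr (fun x => by simp)
  | cons a s ha hs ih =>
      have he : (fun x : E2 => (Finset.cons a s ha).inf' (Finset.cons_nonempty ha) (fun t => dist x (cpt t 1) ^ 2))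
          = fun x => min (dist x (cpt a 1) ^ 2) (s.inf' hs (fun t => dist x (cpt t 1) ^ 2)) := by
        funext x
        rw [Finset.inf'_cons (H := hs)]
      rw [he]
      exact Continuous.min ((continuous_id.dist continuous_const).pow 2) ih

lemma inf'_add_const (T : Finset ℝ) (hT : T.Nonempty) (f : ℝ → ℝ) (c : ℝ) :
    T.inf' hT (fun t => f t + c) = T.inf' hT f + c := by
  induction hT using Finset.Nonempty.cons_induction with
  | singleton a => simp
  | cons a s ha hs ih =>
      rw [Finset.inf'_cons (H := hs), Finset.inf'_cons (H := hs), ih]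
      exact min_add_add_right _ _ _

lemma cDist_eq (T : Finset ℝ) (hT : T.Nonempty) :
    cDistortion (Measure.map (fun x : ℝ => cpt x 0) (uniformIccM 0 2))
        ((fun t : ℝ => cpt t 1) '' (T : Set ℝ))
      = 1 + (1/2) * ∫ x in (0:ℝ)..2, dm T hT x := by
  rw [cDistortion]
  have hF : (fun x : E2 => (⨅ a : ((fun t : ℝ => cpt t 1) '' (T : Set ℝ)), dist x (a:E2) ^ 2))
      = fun x : E2 => T.inf' hT (fun t => dist x (cpt t 1) ^ 2) := by
    funext x
    exact iInf_img T hT (fun z => dist x z ^ 2)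
  simp only [hF]
  rw [integral_map cont_cpt0.aemeasurable ((cont_infdist T hT).aestronglyMeasurable)]
  have h2 : (fun y : ℝ => T.inf' hT (fun t => dist (cpt y 0) (cpt t 1) ^ 2))
      = fun y : ℝ => dm T hT y + 1 := by
    funext y
    rw [show (fun t => dist (cpt y 0) (cpt t 1) ^ 2) = fun t => (y-t)^2 + 1 by
      funext t; exact dist_cpt_sq y t]
    exact inf'_add_const T hT _ 1
  simp only [h2]
  rw [uniformIccM, MeasureTheory.integral_smul_measure]
  have hint : IntegrableOn (fun y => dm T hT y) (Icc (0:ℝ) 2) volume :=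
    (cont_dm T hT).integrableOn_Icc
  have hint1 : IntegrableOn (fun _ : ℝ => (1:ℝ)) (Icc (0:ℝ) 2) volume :=
    integrableOn_const (by rw [Real.volume_Icc]; exact ENNReal.ofReal_ne_top)
  rw [MeasureTheory.integral_add hint hint1]
  have hv1 : ∫ _ in Icc (0:ℝ) 2, (1:ℝ) = 2 := by
    rw [setIntegral_const, Real.volume_real_Icc, smul_eq_mul, mul_one] <;> norm_num
  have hv2 : ∫ y in Icc (0:ℝ) 2, dm T hT y = ∫ x in (0:ℝ)..2, dm T hT x := by
    rw [MeasureTheory.integral_Icc_eq_integral_Ioc, intervalIntegral.integral_of_le (by norm_num : (0:ℝ) ≤ 2)]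
  rw [hv1, hv2]
  have : ((ENNReal.ofReal (2 - 0))⁻¹).toReal = 1/2 := by
    rw [ENNReal.toReal_inv, ENNReal.toReal_ofReal] <;> norm_num
  rw [this, smul_eq_mul]
  ring



lemma key (n : ℕ) (hn : 1 ≤ n) (T : Finset ℝ) (hT : T.Nonempty) (hcard : T.card = n)
    (hsub : ∀ t ∈ T, 0 ≤ t ∧ t ≤ 28/15)
    (heval : ∫ x in (0:ℝ)..2, dm T hT x = Phi n 0) :
    IsOptimalNSet (Measure.map (fun x : ℝ => cpt x 0) (uniformIccM 0 2))
        (segment ℝ (cpt 0 1) (cpt (28/15) 1)) n ((fun t : ℝ => cpt t 1) '' (T : Set ℝ)) ∧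
      cqError (Measure.map (fun x : ℝ => cpt x 0) (uniformIccM 0 2))
        (segment ℝ (cpt 0 1) (cpt (28/15) 1)) n = 1 + (1/2) * Phi n 0 := by
  set P := Measure.map (fun x : ℝ => cpt x 0) (uniformIccM 0 2) with hP
  set S := segment ℝ (cpt 0 1) (cpt (28/15) 1) with hS
  set φ : ℝ → E2 := fun t : ℝ => cpt t 1 with hφ
  set α : Set E2 := φ '' (T : Set ℝ) with hα
  have hSeq : S = φ '' Set.Icc 0 (28/15) := seg_eq
  have hαS : α ⊆ S := by
    rw [hα, hSeq]
    apply Set.image_mono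
    intro t ht
    exact hsub t (by exact_mod_cast ht)
  have hαfin : α.Finite := (T.finite_toSet).image φ
  have hαcard : α.ncard = n := by
    rw [hα, Set.ncard_image_of_injective _ cpt1_inj, Set.ncard_coe_finset, hcard]
  have hvmem : (1 + (1/2) * Phi n 0) ∈
      {v : ℝ | ∃ β : Set E2, β ⊆ S ∧ β.Finite ∧ 1 ≤ β.ncard ∧ β.ncard ≤ n ∧
        v = cDistortion P β} := by
    exact ⟨α, hαS, hαfin, by omega, by omega, by rw [hα, hφ, hP, cDist_eq T hT, heval]⟩
  have hlb : ∀ v ∈ {v : ℝ | ∃ β : Set E2, β ⊆ S ∧ β.Finite ∧ 1 ≤ β.ncard ∧ β.ncard ≤ n ∧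
        v = cDistortion P β}, (1 + (1/2) * Phi n 0) ≤ v := by
    rintro v ⟨β, hβS, hβfin, hβ1, hβn, rfl⟩
    -- extract the abscissa set
    set T0 : Set ℝ := φ ⁻¹' β ∩ Set.Icc 0 (28/15) with hT0
    have himg : φ '' T0 = β := by
      apply Set.Subset.antisymm
      · rintro z ⟨t, ⟨htβ, _⟩, rfl⟩; exact htβ
      · intro z hz
        obtain ⟨t, ht, rfl⟩ := (hSeq ▸ hβS) hz
        exact ⟨t, ⟨hz, ht⟩, rfl⟩
    have hT0fin : T0.Finite :=
      ((hβfin.preimage (Set.injOn_of_injective cpt1_inj)).inter_of_left _)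
    have hT0card : T0.ncard = β.ncard := by
      rw [← himg, Set.ncard_image_of_injective _ cpt1_inj]
    have hIccInf : (Set.Icc (0:ℝ) (28/15)).Infinite := Set.Icc_infinite (by norm_num)
    obtain ⟨T1, hT01, hT1Icc, hT1card⟩ :=
      hIccInf.exists_superset_ncard_eq (k := n) (show T0 ⊆ Set.Icc 0 (28/15) from Set.inter_subset_right) hT0fin (by omega)
    have hT1fin : T1.Finite := by
      apply Set.finite_of_ncard_ne_zero
      omega
    set F0 : Finset ℝ := hT0fin.toFinset with hF0
    set F1 : Finset ℝ := hT1fin.toFinset with hF1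
    have hβne : β.Nonempty := Set.nonempty_of_ncard_ne_zero (by omega)
    have hT0ne : T0.Nonempty := by
      rcases hβne with ⟨z, hz⟩
      obtain ⟨t, ht, _⟩ := (himg ▸ hz :)
      exact ⟨t, ht⟩
    have hF0ne : F0.Nonempty := by
      rwa [hF0, Set.Finite.toFinset_nonempty]
    have hF1ne : F1.Nonempty := by
      rw [hF1, Set.Finite.toFinset_nonempty]
      exact hT0ne.mono hT01
    have hF01 : F0 ⊆ F1 := by
      rw [hF0, hF1, Set.Finite.toFinset_subset_toFinset]
      exact hT01
    have hF1card : F1.card = n := by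
      rw [hF1, ← Set.ncard_coe_finset, Set.Finite.coe_toFinset, hT1card]
    have hvβ : cDistortion P β = 1 + (1/2) * ∫ x in (0:ℝ)..2, dm F0 hF0ne x := by
      rw [← himg, hφ, hP]
      rw [show T0 = ((F0 : Finset ℝ) : Set ℝ) by rw [hF0, Set.Finite.coe_toFinset]]
      exact cDist_eq F0 hF0ne
    have hmono : ∀ x : ℝ, dm F1 hF1ne x ≤ dm F0 hF0ne x := by
      intro x
      exact Finset.inf'_mono _ hF01 hF0ne
    have hintmono : ∫ x in (0:ℝ)..2, dm F1 hF1ne x ≤ ∫ x in (0:ℝ)..2, dm F0 hF0ne x := by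
      apply intervalIntegral.integral_mono_on (by norm_num)
        ((cont_dm F1 hF1ne).intervalIntegrable _ _) ((cont_dm F0 hF0ne).intervalIntegrable _ _)
      intro x _
      exact hmono x
    have hmemF1 : ∀ t ∈ F1, (0:ℝ) ≤ t ∧ t ≤ 28/15 := by
      intro t ht
      rw [hF1, Set.Finite.mem_toFinset] at ht
      exact ⟨(hT1Icc ht).1, (hT1Icc ht).2⟩
    have hLB := LB n F1 hF1ne hF1card 0 (le_refl 0) hmemF1
    linarith
  have hcq : cqError P S n = 1 + (1/2) * Phi n 0 := by
    rw [cqError]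
    exact le_antisymm (csInf_le ⟨_, hlb⟩ hvmem) (le_csInf ⟨_, hvmem⟩ hlb)
  refine ⟨⟨hαS, hαfin, by omega, by omega, ?_⟩, hcq⟩
  rw [hα, hφ, hP, cDist_eq T hT, heval, ← hP, hcq]

/-- For the uniform distribution `P` on `{(x,0) : 0 ≤ x ≤ 2}`, with constraint the segment of the
line `y = 1` joining `(0, 1)` and `(28/15, 1)`: for `1 ≤ n ≤ 7` the set
`{((2i-1)/n, 1) : 1 ≤ i ≤ n}` is an optimal set of `n` points; and for every `n ≥ 8` the set
`{(aᵢ, 1) : 1 ≤ i ≤ n}` with `aᵢ = 28(2i-1)/(15(2n-1))` for `1 ≤ i ≤ n-1` and `aₙ = 28/15`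
is an optimal set of `n` points, with `n`th constrained quantization error
`7(5788(n-1)n + 3015)/(10125(1-2n)²)`. -/
theorem optimal_sets_uniform_segment_line_y_eq_one_offset :
    (∀ n : ℕ, 1 ≤ n → n ≤ 7 →
      IsOptimalNSet (Measure.map (fun x : ℝ => cpt x 0) (uniformIccM 0 2))
        (segment ℝ (cpt 0 1) (cpt (28/15) 1)) n
        ((fun i : ℕ => cpt ((2 * (i : ℝ) - 1) / (n : ℝ)) 1) '' Icc 1 n)) ∧
    ∀ n : ℕ, 8 ≤ n →
      IsOptimalNSet (Measure.map (fun x : ℝ => cpt x 0) (uniformIccM 0 2))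
        (segment ℝ (cpt 0 1) (cpt (28/15) 1)) n
        ((fun i : ℕ => cpt
            (if i = n then 28/15
              else 28 * (2 * (i : ℝ) - 1) / (15 * (2 * (n : ℝ) - 1))) 1) '' Icc 1 n) ∧
      cqError (Measure.map (fun x : ℝ => cpt x 0) (uniformIccM 0 2))
        (segment ℝ (cpt 0 1) (cpt (28/15) 1)) n =
        7 * (5788 * ((n : ℝ) - 1) * (n : ℝ) + 3015) / (10125 * (1 - 2 * (n : ℝ)) ^ 2) := by
  constructor
  · -- 1 ≤ n ≤ 7
    intro n hn1 hn7
    have hn0 : (0:ℝ) < n := by exact_mod_cast hn1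
    have hn7' : (n:ℝ) ≤ 7 := by exact_mod_cast hn7
    set f : ℕ → ℝ := fun i : ℕ => (2*(i:ℝ)-1)/(n:ℝ) with hf
    set T : Finset ℝ := (Finset.Icc 1 n).image f with hTd
    have hT : T.Nonempty := ((Finset.nonempty_Icc).2 hn1).image f
    have hfinj : Function.Injective f := by
      intro a b h
      simp only [hf, div_eq_div_iff (ne_of_gt hn0) (ne_of_gt hn0)] at h
      have : (a:ℝ) = b := by nlinarith
      exact_mod_cast this
    have hcard : T.card = n := by
      rw [hTd, Finset.card_image_of_injective _ hfinj, Nat.card_Icc]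
      omega
    have hsub : ∀ t ∈ T, 0 ≤ t ∧ t ≤ 28/15 := by
      intro t ht
      obtain ⟨j, hj, rfl⟩ := Finset.mem_image.1 ht
      rw [Finset.mem_Icc] at hj
      have hj1 : (1:ℝ) ≤ j := by exact_mod_cast hj.1
      have hjn : (j:ℝ) ≤ n := by exact_mod_cast hj.2
      constructor
      · apply div_nonneg (by linarith) hn0.le
      · rw [div_le_div_iff₀ hn0 (by norm_num)]
        nlinarith
    have hEA := evalA n hn1 n 0 hn1 (by omega) (by rw [Nat.zero_add]; exact hT)
    have hbnd : (2*((0:ℕ):ℝ)/(n:ℝ)) = 0 := by norm_num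
    rw [hbnd] at hEA
    have heval : ∫ x in (0:ℝ)..2, dm T hT x = Phi n 0 := by
      rw [show (∫ x in (0:ℝ)..2, dm T hT x) = ∫ x in (0:ℝ)..2,
        dm ((Finset.Icc (0+1) n).image f) (by rw [Nat.zero_add]; exact hT) x from rfl]
      rw [hEA, Phi, if_pos (by norm_num; nlinarith)]
      field_simp
      ring
    have hkey := key n hn1 T hT hcard hsub heval
    have hset : ((fun i : ℕ => cpt ((2*(i:ℝ)-1)/(n:ℝ)) 1) '' Set.Icc 1 n)
        = (fun t : ℝ => cpt t 1) '' (T : Set ℝ) := by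
      rw [hTd, Finset.coe_image, Finset.coe_Icc, Set.image_image]
    rw [hset]
    exact hkey.1
  · -- n ≥ 8
    intro n hn8
    have hn1 : 1 ≤ n := by omega
    have hn0 : (0:ℝ) < n := by exact_mod_cast hn1
    have hn8' : (8:ℝ) ≤ n := by exact_mod_cast hn8
    have hd0 : (0:ℝ) < 2*(n:ℝ)-1 := by linarith
    set f : ℕ → ℝ := fun i : ℕ =>
      if i = n then (28:ℝ)/15 else 28*(2*(i:ℝ)-1)/(15*(2*(n:ℝ)-1)) with hf
    have hfn : f n = 28/15 := by simp [hf]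
    have hfo : ∀ j : ℕ, j ≠ n → f j = 28*(2*(j:ℝ)-1)/(15*(2*(n:ℝ)-1)) := by
      intro j hj; simp [hf, hj]
    have hmono : ∀ x y : ℕ, x < y → y ≤ n → f x < f y := by
      intro x y hxy hyn
      have hxn : x ≠ n := by omega
      rw [hfo x hxn]
      rcases eq_or_ne y n with hy | hyn'
      · rw [hy, hfn]
        rw [div_lt_div_iff₀ (by positivity) (by norm_num)]
        have hx' : (x:ℝ) < n := by
          have : x < n := hy ▸ hxy
          exact_mod_cast this
        nlinarith
      · rw [hfo y hyn']
        have hxy' : (x:ℝ) < y := by exact_mod_cast hxy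
        rw [div_lt_div_iff₀ (by positivity) (by positivity)]
        nlinarith
    set T : Finset ℝ := (Finset.Icc 1 n).image f with hTd
    have hT : T.Nonempty := ((Finset.nonempty_Icc).2 hn1).image f
    have hcard : T.card = n := by
      rw [hTd, Finset.card_image_of_injOn, Nat.card_Icc]
      · omega
      · intro x hx y hy hxy
        rw [Finset.coe_Icc, Set.mem_Icc] at hx hy
        rcases lt_trichotomy x y with h | h | h
        · exact absurd hxy (ne_of_lt (hmono x y h hy.2))
        · exact h
        · exact absurd hxy.symm (ne_of_lt (hmono y x h hx.2))
    have hsub : ∀ t ∈ T, 0 ≤ t ∧ t ≤ 28/15 := by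
      intro t ht
      obtain ⟨j, hj, rfl⟩ := Finset.mem_image.1 ht
      rw [Finset.mem_Icc] at hj
      have hj1 : (1:ℝ) ≤ j := by exact_mod_cast hj.1
      have hjn : (j:ℝ) ≤ n := by exact_mod_cast hj.2
      rcases eq_or_ne j n with hjn' | hjn'
      · rw [hjn', hfn]; norm_num
      · rw [hfo j hjn']
        constructor
        · apply div_nonneg (by linarith) (by linarith)
        · rw [div_le_div_iff₀ (by linarith) (by norm_num)]
          nlinarith
    have hEB := evalB n hn8 n 0 hn1 (by omega) (by rw [Nat.zero_add]; exact hT)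
    have hbnd : (56*((0:ℕ):ℝ)/(15*(2*(n:ℝ)-1))) = 0 := by norm_num
    rw [hbnd] at hEB
    have heval : ∫ x in (0:ℝ)..2, dm T hT x = Phi n 0 := by
      rw [show (∫ x in (0:ℝ)..2, dm T hT x) = ∫ x in (0:ℝ)..2,
        dm ((Finset.Icc (0+1) n).image f) (by rw [Nat.zero_add]; exact hT) x from rfl]
      rw [hEB, Phi, if_neg (by push_neg; nlinarith)]
      have h1 : (2*(n:ℝ)-1) ≠ 0 := ne_of_gt hd0
      have e : ((n:ℝ)-1) = ((2*(n:ℝ)-1) - 1)/2 := by ring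
      rw [e]
      generalize 2*(n:ℝ)-1 = d at h1 ⊢
      field_simp
      ring
    have hkey := key n hn1 T hT hcard hsub heval
    have hset : ((fun i : ℕ => cpt
          (if i = n then (28:ℝ)/15 else 28 * (2 * (i : ℝ) - 1) / (15 * (2 * (n : ℝ) - 1))) 1)
            '' Set.Icc 1 n)
        = (fun t : ℝ => cpt t 1) '' (T : Set ℝ) := by
      rw [hTd, Finset.coe_image, Finset.coe_Icc, Set.image_image]
    rw [hset]
    refine ⟨hkey.1, ?_⟩
    rw [hkey.2, Phi, if_neg (by push_neg; nlinarith)]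
    have h1 : (2*(n:ℝ)-1) ≠ 0 := ne_of_gt hd0
    have h2 : (1-2*(n:ℝ)) ≠ 0 := by intro h; apply h1; linarith
    field_simp
    ring
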